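/- arXiv:2009.03391 — 5 statements merged into one kernel-verified Lean document; each statement's English description precedes it below -/
import Mathlib

section
/- If Y has a Poisson distribution with parameter λ ∈ (0,1], then E|Y - λ|^(5/2) ≤ √8 · λ. -/
open scoped Nat ENNReal
open NNReal MeasureTheory ProbabilityTheory Real

lemma hs0 (x : ℝ) : HasSum (fun k : ℕ => x ^ k / k !) (Real.exp x) := by
  rw [Real.exp_eq_exp_ℝ]
  exact NormedSpace.expSeries_div_hasSum_exp x

lemma hs1 (x : ℝ) : HasSum (fun k : ℕ => (k : ℝ) * x ^ k / k !) (x * Real.exp x) := by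
  have h := (hs0 x).mul_left x
  have he : ∀ k : ℕ, ((k + 1 : ℕ) : ℝ) * x ^ (k + 1) / (k + 1)! = x * (x ^ k / k !) := by
    intro k
    have hk : ((k !) : ℝ) ≠ 0 := by positivity
    rw [Nat.factorial_succ]
    push_cast
    field_simp
    ring
  have h2 := (hasSum_nat_add_iff (f := fun k : ℕ => (k : ℝ) * x ^ k / k !) 1).mp
    (by simp only [he]; exact h)
  simpa using h2

lemma hs2 (x : ℝ) : HasSum (fun k : ℕ => (k : ℝ) * ((k : ℝ) - 1) * x ^ k / k !)
    (x ^ 2 * Real.exp x) := by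
  have h := (hs1 x).mul_left x
  have he : ∀ k : ℕ, ((k + 1 : ℕ) : ℝ) * (((k + 1 : ℕ) : ℝ) - 1) * x ^ (k + 1) / (k + 1)! =
      x * ((k : ℝ) * x ^ k / k !) := by
    intro k
    have hk : ((k !) : ℝ) ≠ 0 := by positivity
    rw [Nat.factorial_succ]
    push_cast
    field_simp
    ring
  have h2 := (hasSum_nat_add_iff
    (f := fun k : ℕ => (k : ℝ) * ((k : ℝ) - 1) * x ^ k / k !) 1).mp
    (by simp only [he]; exact h)
  have : x * (x * Real.exp x) = x ^ 2 * Real.exp x := by ring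
  simpa [this] using h2

lemma hs3 (x : ℝ) : HasSum (fun k : ℕ => (k : ℝ) * ((k : ℝ) - 1) * ((k : ℝ) - 2) * x ^ k / k !)
    (x ^ 3 * Real.exp x) := by
  have h := (hs2 x).mul_left x
  have he : ∀ k : ℕ, ((k + 1 : ℕ) : ℝ) * (((k + 1 : ℕ) : ℝ) - 1) * (((k + 1 : ℕ) : ℝ) - 2) *
      x ^ (k + 1) / (k + 1)! = x * ((k : ℝ) * ((k : ℝ) - 1) * x ^ k / k !) := by
    intro k
    have hk : ((k !) : ℝ) ≠ 0 := by positivity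
    rw [Nat.factorial_succ]
    push_cast
    field_simp
    ring
  have h2 := (hasSum_nat_add_iff
    (f := fun k : ℕ => (k : ℝ) * ((k : ℝ) - 1) * ((k : ℝ) - 2) * x ^ k / k !) 1).mp
    (by simp only [he]; exact h)
  have : x * (x ^ 2 * Real.exp x) = x ^ 3 * Real.exp x := by ring
  simpa [this] using h2
noncomputable def gfun (x : ℝ) (k : ℕ) : ℝ := ((k : ℝ) - x) ^ 2 * (1 + x + k) / 2

lemma gfun_nonneg {x : ℝ} (hx : 0 ≤ x) (k : ℕ) : 0 ≤ gfun x k := by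
  have : (0:ℝ) ≤ (k:ℝ) := Nat.cast_nonneg k
  unfold gfun; positivity

lemma pointwise_bound {x : ℝ} (hx : 0 ≤ x) (k : ℕ) :
    |(k : ℝ) - x| ^ ((5 : ℝ) / 2) ≤ gfun x k := by
  set t : ℝ := |(k : ℝ) - x| with htdef
  have ht : 0 ≤ t := abs_nonneg _
  have hk0 : (0:ℝ) ≤ (k:ℝ) := Nat.cast_nonneg k
  have h52 : t ^ ((5 : ℝ) / 2) = t ^ 2 * Real.sqrt t := by
    rw [show ((5:ℝ)/2) = (2:ℝ) + 1/2 by norm_num, Real.rpow_add' ht (by norm_num),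
      Real.sqrt_eq_rpow]
    norm_num
  have hsq : Real.sqrt t ≤ (1 + t) / 2 := by
    nlinarith [sq_nonneg (Real.sqrt t - 1), Real.sq_sqrt ht]
  have htle : t ≤ (k : ℝ) + x := by
    rw [htdef, abs_le]; constructor <;> linarith
  have hts : t ^ 2 = ((k:ℝ) - x) ^ 2 := sq_abs _
  have : t ^ 2 * Real.sqrt t ≤ t ^ 2 * ((1 + ((k:ℝ) + x)) / 2) := by
    nlinarith [sq_nonneg t, Real.sqrt_nonneg t]
  rw [h52]
  unfold gfun
  nlinarith [this]
lemma hsg (l : ℝ≥0) :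
    HasSum (fun k : ℕ => poissonPMFReal l k * gfun l k) ((l : ℝ) + (l : ℝ) ^ 2) := by
  set x : ℝ := (l : ℝ) with hx
  have h := (((hs3 x).add (((hs2 x).mul_left (4 - x)).add
    (((hs1 x).mul_left (2 - 3 * x - x ^ 2)).add
    ((hs0 x).mul_left (x ^ 2 + x ^ 3))))).mul_left (Real.exp (-x) / 2))
  convert h using 1
  · rfl
  · funext k
    have hk : ((k !) : ℝ) ≠ 0 := by positivity
    simp only [poissonPMFReal, gfun]
    field_simp
    ring
  · have he : Real.exp (-x) * Real.exp x = 1 := by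
      rw [← Real.exp_add]; simp
    linear_combination (-(x + x ^ 2)) * he
lemma poissonPMF_apply (l : ℝ≥0) (k : ℕ) :
    poissonPMF l k = ENNReal.ofReal (poissonPMFReal l k) := rfl

lemma gfun_integrable (l : ℝ≥0) : Integrable (gfun l) (poissonMeasure l) := by
  have hx : (0:ℝ) ≤ (l:ℝ) := l.coe_nonneg
  constructor
  · exact (measurable_from_nat (f := gfun l)).aestronglyMeasurable
  · rw [HasFiniteIntegral, lintegral_countable']
    have heq : ∀ k : ℕ, ‖gfun l k‖ₑ * poissonMeasure l {k} =
        ENNReal.ofReal (poissonPMFReal l k * gfun l k) := by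
      intro k
      rw [show poissonMeasure l {k} = poissonPMF l k by
        rw [poissonMeasure_singleton]; rfl,
        poissonPMF_apply, Real.enorm_eq_ofReal (gfun_nonneg hx k),
        ← ENNReal.ofReal_mul (gfun_nonneg hx k), mul_comm]
    rw [tsum_congr heq, ← ENNReal.ofReal_tsum_of_nonneg
      (fun k => mul_nonneg poissonPMFReal_nonneg (gfun_nonneg hx k)) (hsg l).summable]
    exact ENNReal.ofReal_lt_top

lemma gfun_integral (l : ℝ≥0) :
    ∫ k, gfun l k ∂(poissonMeasure l) = (l : ℝ) + (l : ℝ) ^ 2 := by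
  have hx : (0:ℝ) ≤ (l:ℝ) := l.coe_nonneg
  rw [integral_poissonMeasure' (gfun_integrable l)]
  rw [← (hsg l).tsum_eq]
  apply tsum_congr
  intro k
  rw [smul_eq_mul]; rfl
theorem poisson_abs_central_moment_five_halves
    {Ω : Type*} [MeasurableSpace Ω] (P : Measure Ω) [IsProbabilityMeasure P]
    (Y : Ω → ℕ) (l : ℝ≥0) (hl0 : 0 < l) (hl1 : l ≤ 1)
    (hY : Measure.map Y P = poissonMeasure l) :
    ∫ ω, |(Y ω : ℝ) - l| ^ ((5 : ℝ) / 2) ∂P ≤ Real.sqrt 8 * l := by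
  have hx : (0:ℝ) ≤ (l:ℝ) := l.coe_nonneg
  have hYm : AEMeasurable Y P := by
    by_contra hc
    rw [Measure.map_of_not_aemeasurable hc] at hY
    have h1 : poissonMeasure l Set.univ = 1 := measure_univ
    rw [← hY] at h1
    simp at h1
  have hgsm : AEStronglyMeasurable (gfun l) (Measure.map Y P) :=
    (measurable_from_nat (f := gfun l)).aestronglyMeasurable
  have hgi : Integrable (fun ω => gfun l (Y ω)) P := by
    have := (integrable_map_measure hgsm hYm).mp (by rw [hY]; exact gfun_integrable l)
    exact this
  have step1 : ∫ ω, |(Y ω : ℝ) - l| ^ ((5 : ℝ) / 2) ∂P ≤ ∫ ω, gfun l (Y ω) ∂P := by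
    refine integral_mono_of_nonneg (ae_of_all _ fun ω => ?_) hgi (ae_of_all _ fun ω => ?_)
    · exact Real.rpow_nonneg (abs_nonneg _) _
    · exact pointwise_bound hx (Y ω)
  have step2 : ∫ ω, gfun l (Y ω) ∂P = (l : ℝ) + (l : ℝ) ^ 2 := by
    rw [← integral_map hYm hgsm, hY, gfun_integral]
  have h8 : (2:ℝ) ≤ Real.sqrt 8 := by
    nlinarith [Real.sq_sqrt (show (0:ℝ) ≤ 8 by norm_num), Real.sqrt_nonneg 8]
  have hl1' : (l:ℝ) ≤ 1 := by exact_mod_cast hl1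
  calc ∫ ω, |(Y ω : ℝ) - l| ^ ((5 : ℝ) / 2) ∂P ≤ (l : ℝ) + (l : ℝ) ^ 2 := by
        rw [← step2]; exact step1
    _ ≤ Real.sqrt 8 * l := by nlinarith
end

section
/- If Y has a Poisson distribution with parameter λ ∈ (0,1], then E(Y^(5/2)) ≤ √15 · λ. -/
open NNReal MeasureTheory ProbabilityTheory Real
open scoped Nat

lemma pmfh_exp_series (x : ℝ) : HasSum (fun n : ℕ => x ^ n / n !) (Real.exp x) := by
  rw [Real.exp_eq_exp_ℝ]
  exact NormedSpace.expSeries_div_hasSum_exp x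

lemma pmfh_moment1 (x : ℝ) : HasSum (fun n : ℕ => (n:ℝ) * x ^ n / n !) (x * Real.exp x) := by
  have h2 : HasSum (fun n : ℕ => ((n+1:ℕ):ℝ) * x ^ (n+1) / (n+1)!) (x * Real.exp x) := by
    convert (pmfh_exp_series x).mul_left x using 2 with n
    · rfl
    rw [Nat.factorial_succ]; push_cast; field_simp; ring
  have := (hasSum_nat_add_iff (f := fun n : ℕ => (n:ℝ) * x ^ n / n !) 1).mp h2
  simpa using this

lemma pmfh_moment2 (x : ℝ) : HasSum (fun n : ℕ => (n:ℝ) * ((n:ℝ)-1) * x ^ n / n !)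
    (x^2 * Real.exp x) := by
  have h2 : HasSum (fun n : ℕ => ((n+2:ℕ):ℝ) * (((n+2:ℕ):ℝ)-1) * x ^ (n+2) / (n+2)!)
      (x^2 * Real.exp x) := by
    convert (pmfh_exp_series x).mul_left (x^2) using 2 with n
    · rfl
    rw [Nat.factorial_succ, Nat.factorial_succ]; push_cast; field_simp; ring
  have := (hasSum_nat_add_iff (f := fun n : ℕ => (n:ℝ) * ((n:ℝ)-1) * x ^ n / n !) 2).mp h2
  simpa [Finset.sum_range_succ] using this

lemma pmfh_moment3 (x : ℝ) : HasSum (fun n : ℕ => (n:ℝ) * ((n:ℝ)-1) * ((n:ℝ)-2) * x ^ n / n !)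
    (x^3 * Real.exp x) := by
  have h2 : HasSum (fun n : ℕ =>
      ((n+3:ℕ):ℝ) * (((n+3:ℕ):ℝ)-1) * (((n+3:ℕ):ℝ)-2) * x ^ (n+3) / (n+3)!)
      (x^3 * Real.exp x) := by
    convert (pmfh_exp_series x).mul_left (x^3) using 2 with n
    · rfl
    rw [Nat.factorial_succ, Nat.factorial_succ, Nat.factorial_succ]; push_cast; field_simp; ring
  have := (hasSum_nat_add_iff
    (f := fun n : ℕ => (n:ℝ) * ((n:ℝ)-1) * ((n:ℝ)-2) * x ^ n / n !) 3).mp h2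
  simpa [Finset.sum_range_succ] using this

lemma pmfh_poly_bound (n : ℕ) : (n:ℝ) ^ ((5:ℝ)/2) ≤
    (n:ℝ) + (19/10) * n * (n-1) + (3/10) * n * (n-1) * (n-2) := by
  have hn : (0:ℝ) ≤ n := Nat.cast_nonneg n
  have h1 : (n:ℝ) ^ ((5:ℝ)/2) = Real.sqrt ((n:ℝ)^5) := by
    rw [show ((5:ℝ)/2) = (5:ℕ) * (2:ℝ)⁻¹ by norm_num, Real.rpow_mul hn,
      Real.rpow_natCast, Real.sqrt_eq_rpow, one_div]
  rw [h1, Real.sqrt_le_iff]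
  rcases lt_or_ge n 32 with h | h
  · interval_cases n <;> norm_num
  · have hx : (32:ℝ) ≤ n := by exact_mod_cast h
    constructor
    · nlinarith [mul_nonneg (mul_nonneg hn (by linarith : (0:ℝ) ≤ (n:ℝ)-1))
        (by linarith : (0:ℝ) ≤ (n:ℝ)-2), mul_nonneg hn (by linarith : (0:ℝ) ≤ (n:ℝ)-1)]
    · nlinarith [sq_nonneg ((n:ℝ)-1), sq_nonneg ((n:ℝ)*(n-1)), sq_nonneg ((n:ℝ)^2-32*n)]

lemma pmfh_hasSum_q (l : ℝ≥0) : HasSum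
    (fun n : ℕ => poissonPMFReal l n *
      ((n:ℝ) + (19/10) * n * (n-1) + (3/10) * n * (n-1) * (n-2)))
    ((l:ℝ) + (19/10) * (l:ℝ)^2 + (3/10) * (l:ℝ)^3) := by
  set y : ℝ := (l:ℝ) with hy
  have H := (((pmfh_moment1 y).add ((pmfh_moment2 y).mul_left (19/10))).add
    ((pmfh_moment3 y).mul_left (3/10))).mul_left (Real.exp (-y))
  convert H using 1
  · rfl
  · funext n
    unfold poissonPMFReal
    rw [← hy]
    ring
  · rw [Real.exp_neg]
    have := Real.exp_ne_zero y
    field_simp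

theorem poisson_moment_five_halves
    {Ω : Type*} [MeasurableSpace Ω] (P : Measure Ω) [IsProbabilityMeasure P]
    (Y : Ω → ℕ) (l : ℝ≥0) (hl0 : 0 < l) (hl1 : l ≤ 1)
    (hY : Measure.map Y P = poissonMeasure l) :
    ∫ ω, (Y ω : ℝ) ^ ((5 : ℝ) / 2) ∂P ≤ Real.sqrt 15 * l := by
  set f : ℕ → ℝ := fun n => (n:ℝ) ^ ((5:ℝ)/2) with hf
  have hf_nonneg : ∀ n, 0 ≤ f n := fun n => Real.rpow_nonneg (Nat.cast_nonneg n) _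
  have hYm : AEMeasurable Y P := by
    by_contra h
    rw [Measure.map_of_not_aemeasurable h] at hY
    exact (IsProbabilityMeasure.ne_zero (poissonMeasure l)) hY.symm
  have hmeas : AEStronglyMeasurable (fun ω => f (Y ω)) P :=
    ((measurable_from_nat (f := f)).comp_aemeasurable hYm).aestronglyMeasurable
  rw [integral_eq_lintegral_of_nonneg_ae
    (Filter.Eventually.of_forall fun ω => hf_nonneg (Y ω)) hmeas]
  have hmap : ∫⁻ ω, ENNReal.ofReal (f (Y ω)) ∂P
      = ∫⁻ n, ENNReal.ofReal (f n) ∂(poissonMeasure l) := by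
    rw [← hY]
    exact (lintegral_map' (measurable_from_nat (f := fun n => ENNReal.ofReal (f n))).aemeasurable
      hYm).symm
  rw [hmap, lintegral_countable']
  have hsing : ∀ n : ℕ, poissonMeasure l {n} = ENNReal.ofReal (poissonPMFReal l n) := by
    intro n
    rw [poissonMeasure_singleton]
    rfl
  set q : ℕ → ℝ := fun n => poissonPMFReal l n *
    ((n:ℝ) + (19/10) * n * (n-1) + (3/10) * n * (n-1) * (n-2)) with hq
  have hq_nonneg : ∀ n, 0 ≤ q n := fun n =>
    mul_nonneg poissonPMFReal_nonneg ((hf_nonneg n).trans (pmfh_poly_bound n))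
  have hchain : (∑' n : ℕ, ENNReal.ofReal (f n) * poissonMeasure l {n})
      ≤ ENNReal.ofReal (Real.sqrt 15 * l) := by
    calc (∑' n : ℕ, ENNReal.ofReal (f n) * poissonMeasure l {n})
        ≤ ∑' n : ℕ, ENNReal.ofReal (q n) := by
          refine ENNReal.tsum_le_tsum fun n => ?_
          rw [hsing n, ← ENNReal.ofReal_mul (hf_nonneg n)]
          refine ENNReal.ofReal_le_ofReal ?_
          rw [hq, mul_comm]
          exact mul_le_mul_of_nonneg_left (pmfh_poly_bound n) poissonPMFReal_nonneg
      _ = ENNReal.ofReal (∑' n : ℕ, q n) :=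
          (ENNReal.ofReal_tsum_of_nonneg hq_nonneg (pmfh_hasSum_q l).summable).symm
      _ ≤ ENNReal.ofReal (Real.sqrt 15 * l) := by
          refine ENNReal.ofReal_le_ofReal ?_
          rw [(pmfh_hasSum_q l).tsum_eq]
          have hl1' : (l:ℝ) ≤ 1 := by exact_mod_cast hl1
          have hl0' : (0:ℝ) ≤ l := l.coe_nonneg
          have hs : (16/5:ℝ) ≤ Real.sqrt 15 := by
            nlinarith [Real.sq_sqrt (by norm_num : (0:ℝ) ≤ 15), Real.sqrt_nonneg 15]
          have h2 : (l:ℝ)^2 ≤ l := by nlinarith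
          have h3 : (l:ℝ)^3 ≤ l := by nlinarith
          nlinarith [mul_le_mul_of_nonneg_right hs hl0']
  calc (∑' n : ℕ, ENNReal.ofReal (f n) * poissonMeasure l {n}).toReal
      ≤ (ENNReal.ofReal (Real.sqrt 15 * l)).toReal :=
        ENNReal.toReal_mono ENNReal.ofReal_ne_top hchain
    _ = Real.sqrt 15 * l := ENNReal.toReal_ofReal
        (mul_nonneg (Real.sqrt_nonneg 15) l.coe_nonneg)
end

section
/- In the setting of the two-point counterexample (p_{2n}=1/n, p_{2n+1}=n^{-1/√(log n)}, F_n = p_{2n+1}X_{2n} + √(p_{2n+1}(1-p_{2n+1}))X_{2n}X_{2n+1}), F_n → 0 almost surely, but p_{2n+1} X_{2n} does not converge to 0 almost surely. -/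
open MeasureTheory ProbabilityTheory Real Filter

lemma aux_exp_neg_sqrt_le {x : ℝ} (hx : 0 < x) :
    Real.exp (-Real.sqrt x) ≤ 24 / x ^ 2 := by
  have h1 : x ^ 2 / 24 ≤ Real.exp (Real.sqrt x) := by
    have := Real.pow_div_factorial_le_exp (Real.sqrt x) (Real.sqrt_nonneg x) 4
    have h4 : (Real.sqrt x) ^ 4 = x ^ 2 := by
      have := Real.sq_sqrt hx.le
      nlinarith [Real.sqrt_nonneg x]
    simpa [h4, Nat.factorial] using this
  rw [Real.exp_neg, inv_eq_one_div, div_le_div_iff₀ (Real.exp_pos _) (by positivity)]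
  nlinarith [Real.exp_pos (Real.sqrt x)]

lemma aux_summable : Summable (fun n : ℕ => Real.exp (-Real.sqrt (Real.log n)) / n) := by
  have hlog2 : (0:ℝ) < Real.log 2 := Real.log_pos (by norm_num)
  have hlog2' : Real.log 2 < 1 := by
    have := Real.log_lt_sub_one_of_pos (by norm_num : (0:ℝ) < 2) (by norm_num)
    linarith
  refine (summable_condensed_iff_of_nonneg (fun n => by positivity)
    (fun m n hm hmn => ?_)).1 ?_
  · -- antitone
    have h1 : Real.exp (-Real.sqrt (Real.log n)) ≤ Real.exp (-Real.sqrt (Real.log m)) := by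
      apply Real.exp_le_exp.2
      apply neg_le_neg
      apply Real.sqrt_le_sqrt
      exact Real.log_le_log (by exact_mod_cast hm) (by exact_mod_cast hmn)
    have h2 : (0:ℝ) < m := by exact_mod_cast hm
    have h3 : (m:ℝ) ≤ n := by exact_mod_cast hmn
    exact div_le_div₀ (Real.exp_pos _).le h1 h2 h3
  · -- condensed series summable
    have hg : Summable (fun k : ℕ => (96 / Real.log 2 ^ 2) * (1 / ((k:ℝ)+1) ^ 2)) := by
      apply Summable.mul_left
      have h0 : Summable (fun n : ℕ => 1 / (n:ℝ) ^ 2) :=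
        Real.summable_one_div_nat_pow.2 one_lt_two
      have := (summable_nat_add_iff 1).2 h0
      exact this.congr (fun n => by push_cast; ring)
    apply Summable.of_nonneg_of_le (fun k => by positivity) (fun k => ?_) hg
    have heq : (2:ℝ) ^ k * (Real.exp (-Real.sqrt (Real.log ((2:ℕ) ^ k : ℕ))) / ((2:ℕ) ^ k : ℕ)) =
        Real.exp (-Real.sqrt (k * Real.log 2)) := by
      have h2 : (((2:ℕ) ^ k : ℕ) : ℝ) = (2:ℝ) ^ k := by push_cast; ring
      rw [h2, Real.log_pow]
      field_simp
    rw [heq]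
    rcases Nat.eq_zero_or_pos k with hk | hk
    · subst hk
      norm_num
      rw [le_div_iff₀ (by positivity)]
      nlinarith
    · have hkpos : (0:ℝ) < k := by exact_mod_cast hk
      have hpos : 0 < (k:ℝ) * Real.log 2 := by positivity
      calc Real.exp (-Real.sqrt ((k:ℝ) * Real.log 2)) ≤ 24 / ((k:ℝ) * Real.log 2) ^ 2 :=
            aux_exp_neg_sqrt_le hpos
        _ ≤ (96 / Real.log 2 ^ 2) * (1 / ((k:ℝ)+1) ^ 2) := by
            have h1 : (1:ℝ) ≤ k := by exact_mod_cast hk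
            have hr : (96 / Real.log 2 ^ 2) * (1 / ((k:ℝ)+1) ^ 2)
                = 96 / (Real.log 2 ^ 2 * ((k:ℝ)+1) ^ 2) := by
              rw [div_mul_div_comm, mul_one]
            rw [hr, div_le_div_iff₀ (by positivity) (by positivity)]
            nlinarith [sq_nonneg (Real.log 2), mul_pos hlog2 hlog2,
              mul_nonneg (mul_pos hlog2 hlog2).le (by nlinarith : (0:ℝ) ≤ 3*(k:ℝ)^2 - 2*k - 1)]

lemma aux_ge_one (n : ℕ) (hlog : (16:ℝ) ≤ Real.log n) (hn3 : 3 ≤ n) :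
    1 ≤ Real.exp (-Real.sqrt (Real.log n)) * Real.sqrt ((n:ℝ) - 1) := by
  have hnR : (3:ℝ) ≤ n := by exact_mod_cast hn3
  have hn0 : (0:ℝ) < n := by linarith
  have hlogpos : (0:ℝ) < Real.log n := by linarith
  obtain ⟨s, hs⟩ : ∃ s, Real.sqrt (Real.log n) = s := ⟨_, rfl⟩
  have hs2 : s^2 = Real.log n := by rw [← hs]; exact Real.sq_sqrt hlogpos.le
  have hs4 : (4:ℝ) ≤ s := by
    rw [← hs, show (4:ℝ) = Real.sqrt 16 by
      rw [show (16:ℝ) = 4^2 by norm_num, Real.sqrt_sq]; norm_num]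
    exact Real.sqrt_le_sqrt hlog
  rw [hs, Real.exp_neg, inv_mul_eq_div, le_div_iff₀ (Real.exp_pos _), one_mul]
  apply Real.le_sqrt_of_sq_le
  have he1 : Real.exp s ^ 2 = Real.exp (2*s) := by
    rw [sq, ← Real.exp_add, two_mul]
  rw [he1]
  have he2 : Real.exp (2*s) ≤ Real.exp (Real.log n / 2) := by
    apply Real.exp_le_exp.2
    nlinarith
  have he3 : Real.exp (Real.log n / 2) = Real.sqrt n := by
    rw [← Real.log_sqrt hn0.le, Real.exp_log (Real.sqrt_pos.2 hn0)]
  have he4 : Real.sqrt (n:ℝ) ≤ (n:ℝ) - 1 := by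
    rw [show ((n:ℝ) - 1) = Real.sqrt (((n:ℝ)-1)^2) by rw [Real.sqrt_sq (by linarith)]]
    apply Real.sqrt_le_sqrt
    nlinarith
  linarith

theorem counterexample_as_convergence
    {Ω : Type*} [MeasurableSpace Ω] (P : Measure Ω) [IsProbabilityMeasure P]
    (Y : ℕ → Ω → ℝ) (p : ℕ → ℝ)
    (hmeas : ∀ n, Measurable (Y n))
    (hindep : iIndepFun Y P)
    (hval : ∀ n ω, Y n ω = -1 ∨ Y n ω = 1)
    (hp : ∀ k, p k ∈ Set.Ioo (0 : ℝ) 1)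
    (hp1 : ∀ k, P {ω | Y k ω = 1} = ENNReal.ofReal (p k))
    (hp_even : ∀ n, 2 ≤ n → p (2 * n) = 1 / n)
    (hp_odd : ∀ n, 2 ≤ n → p (2 * n + 1) = (n : ℝ) ^ (-1 / Real.sqrt (Real.log n)))
    (X : ℕ → Ω → ℝ)
    (hX : ∀ k ω, X k ω = (Y k ω - 2 * p k + 1) / (2 * Real.sqrt (p k * (1 - p k))))
    (F : ℕ → Ω → ℝ)
    (hF : ∀ n ω, F n ω = p (2 * n + 1) * X (2 * n) ω
      + Real.sqrt (p (2 * n + 1) * (1 - p (2 * n + 1))) * X (2 * n) ω * X (2 * n + 1) ω) :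
    (∀ᵐ ω ∂P, Tendsto (fun n => F n ω) atTop (nhds 0)) ∧
      ¬ (∀ᵐ ω ∂P, Tendsto (fun n => p (2 * n + 1) * X (2 * n) ω) atTop (nhds 0)) := by
  have hp0 : ∀ k, 0 < p k := fun k => (hp k).1
  have hp1' : ∀ k, p k < 1 := fun k => (hp k).2
  have ha : ∀ k, 0 < Real.sqrt (p k) := fun k => Real.sqrt_pos.2 (hp0 k)
  have hb : ∀ k, 0 < Real.sqrt (1 - p k) := fun k => Real.sqrt_pos.2 (by linarith [hp1' k])
  have ha2 : ∀ k, Real.sqrt (p k) ^ 2 = p k := fun k => Real.sq_sqrt (hp0 k).le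
  have hb2 : ∀ k, Real.sqrt (1 - p k) ^ 2 = 1 - p k := fun k => Real.sq_sqrt (by linarith [hp1' k])
  have hsq : ∀ k, Real.sqrt (p k * (1 - p k)) = Real.sqrt (p k) * Real.sqrt (1 - p k) :=
    fun k => Real.sqrt_mul (hp0 k).le _
  -- events
  set A : ℕ → Set Ω := fun k => Y k ⁻¹' {1} with hA
  have hAmeas : ∀ k, MeasurableSet (A k) := fun k => (hmeas k) (measurableSet_singleton 1)
  have hPA : ∀ k, P (A k) = ENNReal.ofReal (p k) := fun k => hp1 k
  -- X values
  have hXpos : ∀ k ω, Y k ω = 1 → X k ω = Real.sqrt (1 - p k) / Real.sqrt (p k) := by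
    intro k ω h
    rw [hX, h, hsq]
    have h1 := ha k; have h2 := hb k; have h3 := ha2 k; have h4 := hb2 k
    rw [show (1 : ℝ) - 2 * p k + 1 = 2 * Real.sqrt (1 - p k) ^ 2 by rw [h4]; ring]
    field_simp
  have hXneg : ∀ k ω, Y k ω = -1 → X k ω = -(Real.sqrt (p k) / Real.sqrt (1 - p k)) := by
    intro k ω h
    rw [hX, h, hsq]
    have h1 := ha k; have h2 := hb k; have h3 := ha2 k; have h4 := hb2 k
    rw [show (-1 : ℝ) - 2 * p k + 1 = -(2 * Real.sqrt (p k) ^ 2) by rw [h3]; ring]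
    field_simp
  -- key products
  have hkey1 : ∀ k, Real.sqrt (p k * (1 - p k)) * (Real.sqrt (1 - p k) / Real.sqrt (p k))
      = 1 - p k := by
    intro k
    rw [hsq]
    have h1 := ha k; have h2 := hb k; have h3 := ha2 k; have h4 := hb2 k
    field_simp
    nlinarith
  have hkey2 : ∀ k, Real.sqrt (p k * (1 - p k)) * (Real.sqrt (p k) / Real.sqrt (1 - p k))
      = p k := by
    intro k
    rw [hsq]
    have h1 := ha k; have h2 := hb k; have h3 := ha2 k; have h4 := hb2 k
    field_simp
    nlinarith
  -- F formulas
  have hF0 : ∀ n ω, Y (2*n+1) ω = -1 → F n ω = 0 := by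
    intro n ω h
    rw [hF, hXneg _ _ h]
    have : p (2*n+1) * X (2*n) ω + Real.sqrt (p (2*n+1) * (1 - p (2*n+1))) * X (2*n) ω *
        (-(Real.sqrt (p (2*n+1)) / Real.sqrt (1 - p (2*n+1))))
        = X (2*n) ω * (p (2*n+1) - Real.sqrt (p (2*n+1) * (1 - p (2*n+1))) *
          (Real.sqrt (p (2*n+1)) / Real.sqrt (1 - p (2*n+1)))) := by ring
    rw [show 2*n+1 = 2*n+1 from rfl] at *
    rw [this, hkey2]
    ring
  have hF1 : ∀ n ω, Y (2*n+1) ω = 1 → F n ω = X (2*n) ω := by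
    intro n ω h
    rw [hF, hXpos _ _ h]
    have : p (2*n+1) * X (2*n) ω + Real.sqrt (p (2*n+1) * (1 - p (2*n+1))) * X (2*n) ω *
        (Real.sqrt (1 - p (2*n+1)) / Real.sqrt (p (2*n+1)))
        = X (2*n) ω * (p (2*n+1) + Real.sqrt (p (2*n+1) * (1 - p (2*n+1))) *
          (Real.sqrt (1 - p (2*n+1)) / Real.sqrt (p (2*n+1)))) := by ring
    rw [this, hkey1]
    ring
  -- odd probabilities as exponentials
  have hpodd_exp : ∀ m : ℕ, 2 ≤ m → p (2*m+1) = Real.exp (-Real.sqrt (Real.log m)) := by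
    intro m hm
    rw [hp_odd m hm]
    have hm0 : (0:ℝ) < m := by exact_mod_cast Nat.lt_of_lt_of_le (by norm_num) hm
    have hm1 : (1:ℝ) < m := by exact_mod_cast hm
    have hlog : 0 < Real.log m := Real.log_pos hm1
    have hs : 0 < Real.sqrt (Real.log m) := Real.sqrt_pos.2 hlog
    rw [Real.rpow_def_of_pos hm0]
    congr 1
    have heq : Real.log m * (-1 / Real.sqrt (Real.log m))
        = -(Real.log m / Real.sqrt (Real.log m)) := by ring
    rw [heq, neg_inj, div_eq_iff hs.ne']
    exact (Real.mul_self_sqrt hlog.le).symm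
  -- probability of the pair event
  have hprod : ∀ n : ℕ, P (A (2*n) ∩ A (2*n+1)) = ENNReal.ofReal (p (2*n) * p (2*n+1)) := by
    intro n
    have hind := (hindep.indepFun (show (2*n : ℕ) ≠ 2*n+1 by omega)).measure_inter_preimage_eq_mul
      ({1} : Set ℝ) ({1} : Set ℝ) (measurableSet_singleton 1) (measurableSet_singleton 1)
    rw [hA]
    simp only []
    rw [hind, show Y (2*n) ⁻¹' {1} = {ω | Y (2*n) ω = 1} from rfl,
      show Y (2*n+1) ⁻¹' {1} = {ω | Y (2*n+1) ω = 1} from rfl,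
      hp1, hp1, ← ENNReal.ofReal_mul (hp0 _).le]
  have hsum : Summable (fun n : ℕ => p (2*n) * p (2*n+1)) := by
    rw [← summable_nat_add_iff 2]
    have h2 : Summable (fun n : ℕ => Real.exp (-Real.sqrt (Real.log ((n+2 : ℕ)))) / ((n+2 : ℕ))) :=
      (summable_nat_add_iff 2).2 aux_summable
    apply h2.congr
    intro n
    have hn2 : 2 ≤ n + 2 := by omega
    rw [hp_even _ hn2, hpodd_exp _ hn2]
    rw [one_div, inv_mul_eq_div]
  have hBC1 : ∀ᵐ ω ∂P, ∀ᶠ n in atTop, ω ∉ A (2*n) ∩ A (2*n+1) := by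
    apply MeasureTheory.ae_eventually_notMem
    simp_rw [hprod]
    rw [← ENNReal.ofReal_tsum_of_nonneg (fun n => mul_nonneg (hp0 _).le (hp0 _).le) hsum]
    exact ENNReal.ofReal_ne_top
  -- the bound sequence
  have hg : Tendsto (fun n : ℕ => Real.sqrt (((1:ℝ)/n) / (1 - 1/n))) atTop (nhds 0) := by
    have h1 : Tendsto (fun n : ℕ => ((1:ℝ)/n) / (1 - 1/n)) atTop (nhds ((0:ℝ) / (1 - 0))) :=
      Tendsto.div tendsto_one_div_atTop_nhds_zero_nat
        (tendsto_const_nhds.sub tendsto_one_div_atTop_nhds_zero_nat) (by norm_num)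
    rw [show (0:ℝ)/(1-0) = 0 by norm_num] at h1
    have h2 := (Real.continuous_sqrt.tendsto 0).comp h1
    rw [Real.sqrt_zero] at h2
    exact h2
  have part1 : ∀ᵐ ω ∂P, Tendsto (fun n => F n ω) atTop (nhds 0) := by
    filter_upwards [hBC1] with ω hω
    refine squeeze_zero_norm' ?_ hg
    filter_upwards [hω, eventually_ge_atTop 2] with n hn hn2
    rcases hval (2*n+1) ω with h | h
    · rw [hF0 n ω h]
      rw [norm_zero]
      positivity
    · have hY2n : Y (2*n) ω = -1 := by
        rcases hval (2*n) ω with h' | h'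
        · exact h'
        · exact absurd (Set.mem_inter h' h) hn
      rw [hF1 n ω h, hXneg _ _ hY2n]
      rw [Real.norm_eq_abs, abs_neg, abs_div, abs_of_nonneg (Real.sqrt_nonneg _),
        abs_of_nonneg (Real.sqrt_nonneg _)]
      rw [hp_even n hn2, ← Real.sqrt_div (by positivity)]
  refine ⟨part1, ?_⟩
  intro hconv
  -- independence of the events A (2n)
  have hiIndep : iIndepSet (fun n => A (2*n)) P := by
    rw [iIndepSet_iff_meas_biInter (fun n => hAmeas (2*n))]
    intro s
    have hS := hindep.measure_inter_preimage_eq_mul (s.image (fun i => 2*i))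
      (sets := fun _ => ({1} : Set ℝ)) (fun i _ => measurableSet_singleton 1)
    rw [Finset.set_biInter_finset_image, Finset.prod_image (fun a _ b _ h => by omega)] at hS
    exact hS
  -- divergence of the sum
  have hdiv : ∑' n, P (A (2*n)) = ⊤ := by
    by_contra h
    have hsummable := ENNReal.summable_toReal h
    have h1 : Summable (fun n => p (2*n)) :=
      hsummable.congr (fun n => by rw [hPA]; exact ENNReal.toReal_ofReal (hp0 _).le)
    have h3 : Summable (fun n : ℕ => p (2*(n+2))) :=
      (summable_nat_add_iff (f := fun n => p (2*n)) 2).2 h1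
    have h4 : Summable (fun n : ℕ => (1:ℝ) / ((n + 2 : ℕ) : ℝ)) :=
      h3.congr (fun n => by rw [hp_even _ (by omega : 2 ≤ n + 2)])
    exact Real.not_summable_one_div_natCast
      ((summable_nat_add_iff (f := fun n : ℕ => (1:ℝ) / (n : ℝ)) 2).1 h4)
  have hlimsup := ProbabilityTheory.measure_limsup_eq_one (fun n => hAmeas (2*n)) hiIndep hdiv
  -- the analytic core: eventually the value on the event is at least 1
  have hcore : ∀ᶠ n : ℕ in atTop,
      1 ≤ p (2*n+1) * (Real.sqrt (1 - p (2*n)) / Real.sqrt (p (2*n))) := by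
    have hlogev : ∀ᶠ n : ℕ in atTop, (16:ℝ) ≤ Real.log n :=
      (Real.tendsto_log_atTop.comp tendsto_natCast_atTop_atTop).eventually_ge_atTop 16
    filter_upwards [hlogev, eventually_ge_atTop 3] with n hlog hn3
    have hn2 : 2 ≤ n := by omega
    have hnR : (3:ℝ) ≤ n := by exact_mod_cast hn3
    have hn0 : (0:ℝ) < n := by linarith
    have hX2n : Real.sqrt (1 - p (2*n)) / Real.sqrt (p (2*n)) = Real.sqrt ((n:ℝ) - 1) := by
      rw [hp_even n hn2,
        ← Real.sqrt_div (by rw [sub_nonneg, div_le_one hn0]; linarith : (0:ℝ) ≤ 1 - 1/(n:ℝ))]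
      congr 1
      field_simp
    rw [hX2n, hpodd_exp n hn2]
    exact aux_ge_one n hlog hn3
  -- pick a point in the limsup set where convergence holds
  obtain ⟨ω, hωT, hωL⟩ : ∃ ω, Tendsto (fun n => p (2*n+1) * X (2*n) ω) atTop (nhds 0) ∧
      ω ∈ limsup (fun n => A (2*n)) atTop := by
    by_contra hno
    push_neg at hno
    have hsub : limsup (fun n => A (2*n)) atTop ⊆
        {ω | ¬ Tendsto (fun n => p (2*n+1) * X (2*n) ω) atTop (nhds 0)} := by
      intro ω hω
      exact fun hT => hno ω hT hω
    have h0 := measure_mono (μ := P) hsub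
    rw [hlimsup, ae_iff.1 hconv] at h0
    simp at h0
  have hfreq : ∃ᶠ n in atTop, ω ∈ A (2*n) := mem_limsup_iff_frequently_mem.1 hωL
  have hev1 : ∀ᶠ n in atTop, |p (2*n+1) * X (2*n) ω| < 1 := by
    obtain ⟨N, hN⟩ := Metric.tendsto_atTop.1 hωT 1 one_pos
    filter_upwards [eventually_ge_atTop N] with n hn
    have h := hN n hn
    rwa [Real.dist_eq, sub_zero] at h
  obtain ⟨n, hmem, habs, hcoren⟩ := (hfreq.and_eventually (hev1.and hcore)).exists
  have hY : Y (2*n) ω = 1 := hmem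
  rw [hXpos _ _ hY] at habs
  have hle := le_abs_self (p (2*n+1) * (Real.sqrt (1 - p (2*n)) / Real.sqrt (p (2*n))))
  linarith
end

section
/- Let (Y_n) be independent Poisson variables with E(Y_{2n}) = n^{-3/4} and E(Y_{2n+1}) = n^{-5/16}, and set X_k = (Y_k - λ_k)/√λ_k, F_n = X_{2n} Y_{2n+1}. Then E(|F_n|^{5/2}) ≤ √120 · n^{-1/8}, so F_n → 0 in L^{5/2}. -/
open NNReal MeasureTheory ProbabilityTheory Real Filter
open scoped ENNReal Nat

namespace PoissonAux

/-- casting lemmas for descending factorials -/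
lemma cast_d2 (k : ℕ) : (k.descFactorial 2 : ℝ) = (k:ℝ)^2 - k := by
  rcases k with _ | n
  · simp
  · simp [Nat.descFactorial_succ, Nat.descFactorial_zero, Nat.descFactorial_one]
    push_cast
    ring

lemma cast_d3 (k : ℕ) : (k.descFactorial 3 : ℝ) = (k:ℝ)^3 - 3*(k:ℝ)^2 + 2*k := by
  rcases k with _ | _ | n
  · simp
  · norm_num [Nat.descFactorial_succ, Nat.descFactorial_zero]
  · simp [Nat.descFactorial_succ, Nat.descFactorial_zero]
    push_cast
    ring

lemma cast_d4 (k : ℕ) : (k.descFactorial 4 : ℝ)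
    = (k:ℝ)^4 - 6*(k:ℝ)^3 + 11*(k:ℝ)^2 - 6*k := by
  rcases k with _ | _ | _ | n
  · simp
  · norm_num [Nat.descFactorial_succ, Nat.descFactorial_zero]
  · norm_num [Nat.descFactorial_succ, Nat.descFactorial_zero]
  · simp [Nat.descFactorial_succ, Nat.descFactorial_zero]
    push_cast
    ring

/-- factorial moments of the Poisson distribution as `HasSum` statements -/
lemma hasSum_df (r : ℝ≥0) (m : ℕ) :
    HasSum (fun k => (k.descFactorial m : ℝ) * poissonPMFReal r k) ((r:ℝ)^m) := by
  have key : (fun j => ((j + m).descFactorial m : ℝ) * poissonPMFReal r (j + m))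
      = fun j => (r:ℝ)^m * poissonPMFReal r j := by
    funext j
    have hD : (j !) * ((j+m).descFactorial m) = (j+m)! := by
      simpa using Nat.factorial_mul_descFactorial (Nat.le_add_left m j)
    have hD' : ((j !) : ℝ) * ((j+m).descFactorial m : ℝ) = (((j+m)!) : ℝ) := by
      exact_mod_cast congrArg (Nat.cast : ℕ → ℝ) hD
    unfold poissonPMFReal
    have h1 : (((j+m)!) : ℝ) ≠ 0 := by positivity
    have h2 : ((j !) : ℝ) ≠ 0 := by positivity
    field_simp
    rw [pow_add]
    linear_combination ((r:ℝ)^j * (r:ℝ)^m) * hD'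
  have h2 : HasSum (fun j => ((j + m).descFactorial m : ℝ) * poissonPMFReal r (j + m))
      ((r:ℝ)^m) := by
    rw [key]
    have := (poissonPMFRealSum r).mul_left ((r:ℝ)^m)
    rw [mul_one] at this
    exact this
  have h3 := (hasSum_nat_add_iff (f := fun k => (k.descFactorial m : ℝ) * poissonPMFReal r k)
      m).mp h2
  have h4 : ∑ i ∈ Finset.range m, (i.descFactorial m : ℝ) * poissonPMFReal r i = 0 := by
    apply Finset.sum_eq_zero
    intro i hi
    have : i.descFactorial m = 0 :=
      Nat.descFactorial_eq_zero_iff_lt.mpr (Finset.mem_range.mp hi)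
    simp [this]
  rwa [h4, add_zero] at h3

/-- integrability and value of integrals of nonneg functions against the Poisson measure -/
lemma poisson_int (r : ℝ≥0) {f : ℕ → ℝ} {s : ℝ} (hf : ∀ k, 0 ≤ f k)
    (h : HasSum (fun k => f k * poissonPMFReal r k) s) :
    Integrable f (poissonMeasure r) ∧ ∫ k, f k ∂(poissonMeasure r) = s := by
  have hnonneg : ∀ k, 0 ≤ f k * poissonPMFReal r k :=
    fun k => mul_nonneg (hf k) poissonPMFReal_nonneg
  have hsing : ∀ k : ℕ, (poissonMeasure r) {k} = ENNReal.ofReal (poissonPMFReal r k) := by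
    intro k
    rw [poissonMeasure_singleton]
    rfl
  have hint : Integrable f (poissonMeasure r) := by
    refine ⟨(measurable_of_countable f).aestronglyMeasurable, ?_⟩
    rw [HasFiniteIntegral, lintegral_countable']
    have : ∀ k : ℕ, ‖f k‖ₑ * (poissonMeasure r) {k}
        = ENNReal.ofReal (f k * poissonPMFReal r k) := by
      intro k
      rw [hsing k, ← ofReal_norm, Real.norm_eq_abs, abs_of_nonneg (hf k),
        ← ENNReal.ofReal_mul (hf k)]
    rw [tsum_congr this, ← ENNReal.ofReal_tsum_of_nonneg hnonneg h.summable]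
    exact ENNReal.ofReal_lt_top
  refine ⟨hint, ?_⟩
  rw [integral_poissonMeasure]
  have : ∀ k : ℕ, (Real.exp (-(r:ℝ)) * (r:ℝ) ^ k / (k)!) • f k = f k * poissonPMFReal r k := by
    intro k
    rw [smul_eq_mul, mul_comm]
    rfl
  rw [tsum_congr this]
  exact h.tsum_eq

/-- The key moment bound function for the centered part. -/
lemma poisson_phi (r : ℝ≥0) :
    Integrable (fun k : ℕ => 3/4 * ((k:ℝ) - r)^2 + 1/4 * ((k:ℝ) - r)^4) (poissonMeasure r) ∧
      ∫ k : ℕ, (3/4 * ((k:ℝ) - r)^2 + 1/4 * ((k:ℝ) - r)^4) ∂(poissonMeasure r)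
        = (r:ℝ) + 3/4 * (r:ℝ)^2 := by
  set c : ℝ := (r : ℝ) with hc
  have h := (((((hasSum_df r 4).mul_left (1/4)).add
      ((hasSum_df r 3).mul_left (3/2 - c))).add
      ((hasSum_df r 2).mul_left (5/2 - 3*c + 3/2*c^2))).add
      ((hasSum_df r 1).mul_left (1 - 5/2*c + 3/2*c^2 - c^3))).add
      ((hasSum_df r 0).mul_left (3/4*c^2 + 1/4*c^4))
  have hS : HasSum (fun k : ℕ =>
      (3/4 * ((k:ℝ) - c)^2 + 1/4 * ((k:ℝ) - c)^4) * poissonPMFReal r k)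
      (c + 3/4 * c^2) := by
    convert h using 1
    · rfl
    · funext k
      rw [cast_d4 k, cast_d3 k, cast_d2 k]
      simp only [Nat.descFactorial_one, Nat.descFactorial_zero, Nat.cast_one, pow_zero]
      ring
    · ring
  exact poisson_int r (fun k => by positivity) hS

lemma poisson_cube (r : ℝ≥0) :
    Integrable (fun k : ℕ => (k:ℝ)^3) (poissonMeasure r) ∧
      ∫ k : ℕ, ((k:ℝ)^3) ∂(poissonMeasure r) = (r:ℝ)^3 + 3*(r:ℝ)^2 + (r:ℝ) := by
  set c : ℝ := (r : ℝ) with hc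
  have h := (((hasSum_df r 3).mul_left 1).add
      ((hasSum_df r 2).mul_left 3)).add ((hasSum_df r 1).mul_left 1)
  have hS : HasSum (fun k : ℕ => (k:ℝ)^3 * poissonPMFReal r k) (c^3 + 3*c^2 + c) := by
    convert h using 1
    · rfl
    · funext k
      rw [cast_d3 k, cast_d2 k]
      simp only [Nat.descFactorial_one]
      ring
    · ring
  exact poisson_int r (fun k => by positivity) hS

/-- pointwise bound `|z|^{5/2} ≤ 3/4 z² + 1/4 z⁴` -/
lemma abs_rpow_le (z : ℝ) : |z| ^ ((5:ℝ)/2) ≤ 3/4 * z^2 + 1/4 * z^4 := by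
  set s : ℝ := |z| ^ ((1:ℝ)/2) with hsdef
  have hs : 0 ≤ s := Real.rpow_nonneg (abs_nonneg z) _
  have h1 : |z| ^ ((5:ℝ)/2) = s^5 := by
    rw [hsdef, ← Real.rpow_natCast (|z| ^ ((1:ℝ)/2)) 5, ← Real.rpow_mul (abs_nonneg z)]
    norm_num
  have h2 : z^2 = s^4 := by
    rw [hsdef, ← Real.rpow_natCast (|z| ^ ((1:ℝ)/2)) 4, ← Real.rpow_mul (abs_nonneg z)]
    norm_num
  have h4 : z^4 = s^8 := by
    have : z^4 = (z^2)^2 := by ring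
    rw [this, h2]; ring
  rw [h1, h2, h4]
  have key : 0 ≤ s^4 - 4*s + 3 := by nlinarith [sq_nonneg (s - 1), sq_nonneg s, sq_nonneg (s+1)]
  nlinarith [mul_nonneg (mul_nonneg (mul_nonneg hs hs) (mul_nonneg hs hs)) key]

lemma nat_rpow_le (k : ℕ) : (k:ℝ) ^ ((5:ℝ)/2) ≤ (k:ℝ)^3 := by
  rcases k with _ | n
  · simp [Real.zero_rpow]
  · have h1 : (1:ℝ) ≤ ((n+1 : ℕ) : ℝ) := by push_cast; linarith
    calc ((n+1 : ℕ):ℝ) ^ ((5:ℝ)/2) ≤ ((n+1 : ℕ):ℝ) ^ ((3:ℕ):ℝ) :=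
          Real.rpow_le_rpow_of_exponent_le h1 (by norm_num)
      _ = ((n+1 : ℕ):ℝ)^3 := by rw [Real.rpow_natCast]

end PoissonAux

open PoissonAux

theorem poisson_counterexample_L52_convergence
    {Ω : Type*} [MeasurableSpace Ω] (P : Measure Ω) [IsProbabilityMeasure P]
    (Y : ℕ → Ω → ℕ) (l : ℕ → ℝ≥0)
    (hmeas : ∀ n, Measurable (Y n))
    (hindep : iIndepFun Y P)
    (hpois : ∀ k, Measure.map (Y k) P = poissonMeasure (l k))
    (hl_even : ∀ n, 1 ≤ n → (l (2 * n) : ℝ) = (n : ℝ) ^ (-(3 : ℝ) / 4))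
    (hl_odd : ∀ n, 1 ≤ n → (l (2 * n + 1) : ℝ) = (n : ℝ) ^ (-(5 : ℝ) / 16))
    (X : ℕ → Ω → ℝ)
    (hX : ∀ k ω, X k ω = ((Y k ω : ℝ) - l k) / Real.sqrt (l k))
    (F : ℕ → Ω → ℝ)
    (hF : ∀ n ω, F n ω = X (2 * n) ω * (Y (2 * n + 1) ω : ℝ)) :
    (∀ n, 1 ≤ n → ∫ ω, |F n ω| ^ ((5 : ℝ) / 2) ∂P
        ≤ Real.sqrt 120 * (n : ℝ) ^ (-(1 : ℝ) / 8)) ∧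
      Tendsto (fun n => ∫ ω, |F n ω| ^ ((5 : ℝ) / 2) ∂P) atTop (nhds 0) := by
  have hmain : ∀ n, 1 ≤ n → ∫ ω, |F n ω| ^ ((5 : ℝ) / 2) ∂P
      ≤ Real.sqrt 120 * (n : ℝ) ^ (-(1 : ℝ) / 8) := by
    intro n hn
    have hn1 : (1:ℝ) ≤ (n:ℝ) := by exact_mod_cast hn
    have hnpos : (0:ℝ) < (n:ℝ) := by linarith
    set a : ℝ≥0 := l (2*n) with ha_def
    set b : ℝ≥0 := l (2*n+1) with hb_def
    have ha : (a:ℝ) = (n:ℝ) ^ (-(3:ℝ)/4) := hl_even n hn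
    have hb : (b:ℝ) = (n:ℝ) ^ (-(5:ℝ)/16) := hl_odd n hn
    have hapos : (0:ℝ) < (a:ℝ) := by rw [ha]; positivity
    have ha1 : (a:ℝ) ≤ 1 := by
      rw [ha]; exact Real.rpow_le_one_of_one_le_of_nonpos hn1 (by norm_num)
    have hb1 : (b:ℝ) ≤ 1 := by
      rw [hb]; exact Real.rpow_le_one_of_one_le_of_nonpos hn1 (by norm_num)
    have hbnn : (0:ℝ) ≤ (b:ℝ) := b.coe_nonneg
    set g : ℕ → ℝ := fun k => |((k:ℝ) - a) / Real.sqrt a| ^ ((5:ℝ)/2) with hg_def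
    set h : ℕ → ℝ := fun k => (k:ℝ) ^ ((5:ℝ)/2) with hh_def
    have hgnn : ∀ k, 0 ≤ g k := fun k => Real.rpow_nonneg (abs_nonneg _) _
    have hhnn : ∀ k, 0 ≤ h k := fun k => Real.rpow_nonneg (Nat.cast_nonneg _) _
    -- pointwise identity
    have hpt : ∀ ω, |F n ω| ^ ((5:ℝ)/2) = g (Y (2*n) ω) * h (Y (2*n+1) ω) := by
      intro ω
      rw [hF, hX, abs_mul, Real.mul_rpow (abs_nonneg _) (abs_nonneg _),
        Nat.abs_cast]
    -- independence
    have hI : IndepFun (fun ω => g (Y (2*n) ω)) (fun ω => h (Y (2*n+1) ω)) P := by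
      have := hindep.indepFun (show 2*n ≠ 2*n+1 by omega)
      exact this.comp (measurable_of_countable g) (measurable_of_countable h)
    have hgm : AEMeasurable (fun ω => g (Y (2*n) ω)) P :=
      ((measurable_of_countable g).comp (hmeas (2*n))).aemeasurable
    have hhm : AEMeasurable (fun ω => h (Y (2*n+1) ω)) P :=
      ((measurable_of_countable h).comp (hmeas (2*n+1))).aemeasurable
    have hsplit : ∫ ω, |F n ω| ^ ((5:ℝ)/2) ∂P
        = (∫ ω, g (Y (2*n) ω) ∂P) * ∫ ω, h (Y (2*n+1) ω) ∂P := by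
      calc ∫ ω, |F n ω| ^ ((5:ℝ)/2) ∂P
          = ∫ ω, g (Y (2*n) ω) * h (Y (2*n+1) ω) ∂P := by
            congr 1; funext ω; exact hpt ω
        _ = (∫ ω, g (Y (2*n) ω) ∂P) * ∫ ω, h (Y (2*n+1) ω) ∂P :=
            hI.integral_fun_mul_eq_mul_integral hgm.aestronglyMeasurable hhm.aestronglyMeasurable
    -- transfer to the Poisson measure
    have hgY : ∫ ω, g (Y (2*n) ω) ∂P = ∫ k, g k ∂(poissonMeasure a) := by
      rw [← hpois (2*n), integral_map (hmeas (2*n)).aemeasurable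
        (measurable_of_countable g).aestronglyMeasurable]
    have hhY : ∫ ω, h (Y (2*n+1) ω) ∂P = ∫ k, h k ∂(poissonMeasure b) := by
      rw [← hpois (2*n+1), integral_map (hmeas (2*n+1)).aemeasurable
        (measurable_of_countable h).aestronglyMeasurable]
    -- bound the first factor
    have hsa : Real.sqrt a = (a:ℝ) ^ ((1:ℝ)/2) := Real.sqrt_eq_rpow _
    have hsa52 : (Real.sqrt a) ^ ((5:ℝ)/2) = (a:ℝ) ^ ((5:ℝ)/4) := by
      rw [hsa, ← Real.rpow_mul hapos.le]
      norm_num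
    have hC : (0:ℝ) < (a:ℝ) ^ ((5:ℝ)/4) := Real.rpow_pos_of_pos hapos _
    have hgle : ∀ k : ℕ, g k ≤
        (3/4 * ((k:ℝ) - a)^2 + 1/4 * ((k:ℝ) - a)^4) / ((a:ℝ) ^ ((5:ℝ)/4)) := by
      intro k
      have h1 : g k = |((k:ℝ) - a)| ^ ((5:ℝ)/2) / ((a:ℝ) ^ ((5:ℝ)/4)) := by
        rw [hg_def]
        simp only
        rw [abs_div, abs_of_nonneg (Real.sqrt_nonneg (a:ℝ)),
          Real.div_rpow (abs_nonneg _) (Real.sqrt_nonneg _), hsa52]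
      rw [h1]
      exact div_le_div_of_nonneg_right (abs_rpow_le _) hC.le |>.trans_eq rfl
    have hphi := poisson_phi a
    have hIg : ∫ k, g k ∂(poissonMeasure a) ≤ ((a:ℝ) + 3/4 * (a:ℝ)^2) / ((a:ℝ) ^ ((5:ℝ)/4)) := by
      have := integral_mono_of_nonneg (μ := poissonMeasure a)
        (f := g) (g := fun k => (3/4 * ((k:ℝ) - a)^2 + 1/4 * ((k:ℝ) - a)^4) / ((a:ℝ) ^ ((5:ℝ)/4)))
        (Eventually.of_forall hgnn) (hphi.1.div_const _) (Eventually.of_forall hgle)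
      rwa [integral_div, hphi.2] at this
    -- bound the second factor
    have hcube := poisson_cube b
    have hIh : ∫ k, h k ∂(poissonMeasure b) ≤ 5 * (b:ℝ) := by
      have h1 : ∫ k, h k ∂(poissonMeasure b) ≤ ∫ k : ℕ, ((k:ℝ)^3) ∂(poissonMeasure b) :=
        integral_mono_of_nonneg (Eventually.of_forall hhnn) hcube.1
          (Eventually.of_forall fun k => nat_rpow_le k)
      rw [hcube.2] at h1
      nlinarith [b.coe_nonneg, hb1, sq_nonneg ((b:ℝ) - 1)]
    -- the first factor bound simplifies
    have hIg' : ∫ k, g k ∂(poissonMeasure a) ≤ 7/4 * (n:ℝ) ^ ((3:ℝ)/16) := by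
      have h1 : ((a:ℝ) + 3/4 * (a:ℝ)^2) ≤ 7/4 * (a:ℝ) := by nlinarith
      have h2 : ((a:ℝ) + 3/4 * (a:ℝ)^2) / ((a:ℝ) ^ ((5:ℝ)/4))
          ≤ (7/4 * (a:ℝ)) / ((a:ℝ) ^ ((5:ℝ)/4)) := div_le_div_of_nonneg_right h1 hC.le |>.trans_eq rfl
      have h3 : (7/4 * (a:ℝ)) / ((a:ℝ) ^ ((5:ℝ)/4)) = 7/4 * ((a:ℝ) ^ (-(1:ℝ)/4)) := by
        rw [mul_div_assoc]
        congr 1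
        rw [show (-(1:ℝ)/4) = 1 - (5:ℝ)/4 by norm_num, Real.rpow_sub hapos, Real.rpow_one]
      have h4 : (a:ℝ) ^ (-(1:ℝ)/4) = (n:ℝ) ^ ((3:ℝ)/16) := by
        rw [ha, ← Real.rpow_mul hnpos.le]
        norm_num
      calc ∫ k, g k ∂(poissonMeasure a) ≤ _ := hIg
        _ ≤ (7/4 * (a:ℝ)) / ((a:ℝ) ^ ((5:ℝ)/4)) := h2
        _ = 7/4 * ((a:ℝ) ^ (-(1:ℝ)/4)) := h3
        _ = 7/4 * (n:ℝ) ^ ((3:ℝ)/16) := by rw [h4]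
    -- combine
    have hIgnn : 0 ≤ ∫ k, g k ∂(poissonMeasure a) := integral_nonneg hgnn
    have hIhnn : 0 ≤ ∫ k, h k ∂(poissonMeasure b) := integral_nonneg hhnn
    have hb5 : 5 * (b:ℝ) = 5 * (n:ℝ) ^ (-(5:ℝ)/16) := by rw [hb]
    have hstep : ∫ ω, |F n ω| ^ ((5:ℝ)/2) ∂P
        ≤ (7/4 * (n:ℝ) ^ ((3:ℝ)/16)) * (5 * (n:ℝ) ^ (-(5:ℝ)/16)) := by
      rw [hsplit, hgY, hhY]
      apply mul_le_mul hIg' (hIh.trans_eq hb5) hIhnn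
      positivity
    have hexp : (7/4 * (n:ℝ) ^ ((3:ℝ)/16)) * (5 * (n:ℝ) ^ (-(5:ℝ)/16))
        = 35/4 * (n:ℝ) ^ (-(1:ℝ)/8) := by
      rw [show (35:ℝ)/4 * (n:ℝ) ^ (-(1:ℝ)/8) = 35/4 * ((n:ℝ) ^ ((3:ℝ)/16) * (n:ℝ) ^ (-(5:ℝ)/16))
        by rw [← Real.rpow_add hnpos]; norm_num]
      ring
    have hconst : (35:ℝ)/4 ≤ Real.sqrt 120 := by
      rw [show (35:ℝ)/4 = Real.sqrt ((35/4)^2) by rw [Real.sqrt_sq]; norm_num]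
      apply Real.sqrt_le_sqrt
      norm_num
    calc ∫ ω, |F n ω| ^ ((5:ℝ)/2) ∂P ≤ 35/4 * (n:ℝ) ^ (-(1:ℝ)/8) := by
          rw [← hexp]; exact hstep
      _ ≤ Real.sqrt 120 * (n:ℝ) ^ (-(1:ℝ)/8) := by
          apply mul_le_mul_of_nonneg_right hconst
          positivity
  refine ⟨hmain, ?_⟩
  have hlim : Tendsto (fun n : ℕ => Real.sqrt 120 * (n:ℝ) ^ (-(1:ℝ)/8)) atTop (nhds 0) := by
    have h1 : Tendsto (fun x : ℝ => x ^ (-(1:ℝ)/8)) atTop (nhds 0) := by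
      rw [show (-(1:ℝ)/8) = -(1/8 : ℝ) by norm_num]
      exact tendsto_rpow_neg_atTop (by norm_num)
    have h2 := (h1.comp tendsto_natCast_atTop_atTop).const_mul (Real.sqrt 120)
    simpa using h2
  apply squeeze_zero' (Eventually.of_forall fun n =>
    integral_nonneg fun ω => Real.rpow_nonneg (abs_nonneg _) _) ?_ hlim
  filter_upwards [eventually_ge_atTop 1] with n hn
  exact hmain n hn
end

section
/- In the Poisson counterexample (λ_{2n} = n^{-3/4}, λ_{2n+1} = n^{-5/16}, X_{2n} = (Y_{2n}-λ_{2n})/√λ_{2n}), the sequence λ_{2n+1} X_{2n} does not converge to 0 almost surely; indeed on the event {Y_{2n}=1 i.o.} (which has probability 1), λ_{2n+1} X_{2n} = n^{1/16} - n^{-11/16} for infinitely many n. -/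
open NNReal MeasureTheory ProbabilityTheory Real Filter

theorem poisson_counterexample_J1_not_as
    {Ω : Type*} [MeasurableSpace Ω] (P : Measure Ω) [IsProbabilityMeasure P]
    (Y : ℕ → Ω → ℕ) (l : ℕ → ℝ≥0)
    (hmeas : ∀ n, Measurable (Y n))
    (hindep : iIndepFun Y P)
    (hpois : ∀ k, Measure.map (Y k) P = poissonMeasure (l k))
    (hl_even : ∀ n, 1 ≤ n → (l (2 * n) : ℝ) = (n : ℝ) ^ (-(3 : ℝ) / 4))
    (hl_odd : ∀ n, 1 ≤ n → (l (2 * n + 1) : ℝ) = (n : ℝ) ^ (-(5 : ℝ) / 16))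
    (X : ℕ → Ω → ℝ)
    (hX : ∀ k ω, X k ω = ((Y k ω : ℝ) - l k) / Real.sqrt (l k)) :
    (∀ᵐ ω ∂P, ∃ᶠ n in atTop, Y (2 * n) ω = 1 ∧
        (l (2 * n + 1) : ℝ) * X (2 * n) ω
          = (n : ℝ) ^ ((1 : ℝ) / 16) - (n : ℝ) ^ (-(11 : ℝ) / 16)) ∧
      ¬ (∀ᵐ ω ∂P, Tendsto (fun n => (l (2 * n + 1) : ℝ) * X (2 * n) ω)
          atTop (nhds 0)) := by
  -- the events `Y (2n) = 1`
  set s : ℕ → Set Ω := fun n => Y (2 * n) ⁻¹' {1} with hs_def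
  have hsm : ∀ n, MeasurableSet (s n) := fun n => hmeas _ (measurableSet_singleton 1)
  -- independence of the events
  have h2inj : Function.Injective (fun n : ℕ => 2 * n) := fun a b h => by simpa using h
  have hsi : iIndepSet s P := by
    rw [iIndepSet_iff_meas_biInter hsm]
    intro t
    have key := hindep.measure_inter_preimage_eq_mul (t.image (fun n => 2 * n))
      (sets := fun _ => ({1} : Set ℕ)) (fun i _ => measurableSet_singleton 1)
    have h1 : ⋂ n ∈ t, s n = ⋂ i ∈ t.image (fun n => 2 * n), Y i ⁻¹' {1} := by
      ext ω
      simp only [Set.mem_iInter, Finset.mem_image, hs_def, Set.mem_preimage]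
      constructor
      · rintro h i ⟨n, hn, rfl⟩; exact h n hn
      · intro h n hn; exact h _ ⟨n, hn, rfl⟩
    rw [h1, key, Finset.prod_image (fun a _ b _ h => h2inj h)]
  -- the probability of each event
  have hps : ∀ n, P (s n) =
      ENNReal.ofReal (Real.exp (-(l (2 * n) : ℝ)) * (l (2 * n) : ℝ)) := by
    intro n
    have h1 : P (s n) = (P.map (Y (2 * n))) {1} := by
      rw [Measure.map_apply (hmeas _) (measurableSet_singleton 1)]
    rw [h1, hpois, poissonMeasure_singleton]
    show ENNReal.ofReal (poissonPMFReal (l (2 * n)) 1) = _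
    simp [poissonPMFReal]
  -- divergence of the series
  have hsum : (∑' n, P (s n)) = ⊤ := by
    by_contra h
    have hboundfn : ∀ n : ℕ,
        ENNReal.ofReal (Real.exp (-1) * (n : ℝ) ^ (-(3 : ℝ) / 4)) ≤ P (s n) := by
      intro n
      rcases Nat.eq_zero_or_pos n with rfl | hn
      · simp [Real.zero_rpow (by norm_num : (-(3:ℝ)/4) ≠ 0)]
      · rw [hps n, hl_even n hn]
        apply ENNReal.ofReal_le_ofReal
        apply mul_le_mul_of_nonneg_right _ (Real.rpow_nonneg (Nat.cast_nonneg n) _)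
        apply Real.exp_le_exp.2
        simp only [neg_le_neg_iff]
        exact Real.rpow_le_one_of_one_le_of_nonpos
          (by exact_mod_cast hn) (by norm_num)
    have hle := ENNReal.tsum_le_tsum hboundfn
    have htop : (∑' n : ℕ, ENNReal.ofReal (Real.exp (-1) * (n : ℝ) ^ (-(3 : ℝ) / 4))) ≠ ⊤ :=
      fun ht => h (top_le_iff.mp (ht ▸ hle))
    have hnn : ∀ n : ℕ, 0 ≤ Real.exp (-1) * (n : ℝ) ^ (-(3 : ℝ) / 4) := fun n =>
      mul_nonneg (Real.exp_pos _).le (Real.rpow_nonneg (Nat.cast_nonneg n) _)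
    have hsummable : Summable (fun n : ℕ => Real.exp (-1) * (n : ℝ) ^ (-(3 : ℝ) / 4)) := by
      have h2 := ENNReal.summable_toReal htop
      refine h2.congr fun n => ?_
      rw [ENNReal.toReal_ofReal (hnn n)]
    have hsummable2 : Summable (fun n : ℕ => (n : ℝ) ^ (-(3 : ℝ) / 4)) := by
      have := hsummable.mul_left (Real.exp (-1))⁻¹
      refine this.congr fun n => ?_
      field_simp
    rw [Real.summable_nat_rpow] at hsummable2
    norm_num at hsummable2
  -- second Borel–Cantelli
  have hBC : P (limsup s atTop) = 1 := measure_limsup_eq_one hsm hsi hsum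
  have hae : ∀ᵐ ω ∂P, ω ∈ limsup s atTop := by
    have hm : MeasurableSet (limsup s atTop) := MeasurableSet.measurableSet_limsup hsm
    rw [ae_iff]
    have : {ω | ¬ ω ∈ limsup s atTop} = (limsup s atTop)ᶜ := rfl
    rw [this, measure_compl hm (measure_ne_top _ _), hBC, measure_univ, tsub_self]
  -- the key computation on the event `Y (2n) = 1`, `1 ≤ n`
  have hcomp : ∀ n : ℕ, 1 ≤ n → ∀ ω, Y (2 * n) ω = 1 →
      (l (2 * n + 1) : ℝ) * X (2 * n) ω
        = (n : ℝ) ^ ((1 : ℝ) / 16) - (n : ℝ) ^ (-(11 : ℝ) / 16) := by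
    intro n hn ω hY
    have hr0 : (0 : ℝ) < (n : ℝ) := by exact_mod_cast hn
    rw [hX, hY, hl_even n hn, hl_odd n hn]
    have hsqrt : Real.sqrt ((n : ℝ) ^ (-(3 : ℝ) / 4)) = (n : ℝ) ^ (-(3 : ℝ) / 8) := by
      rw [Real.sqrt_eq_rpow, ← Real.rpow_mul hr0.le]; norm_num
    rw [hsqrt]
    have hne : (n : ℝ) ^ (-(3 : ℝ) / 8) ≠ 0 := (Real.rpow_pos_of_pos hr0 _).ne'
    have e1 : (n : ℝ) ^ ((1 : ℝ) / 16) * (n : ℝ) ^ (-(3 : ℝ) / 8)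
        = (n : ℝ) ^ (-(5 : ℝ) / 16) := by
      rw [← Real.rpow_add hr0]; norm_num
    have e2 : (n : ℝ) ^ (-(11 : ℝ) / 16) * (n : ℝ) ^ (-(3 : ℝ) / 8)
        = (n : ℝ) ^ (-(5 : ℝ) / 16) * (n : ℝ) ^ (-(3 : ℝ) / 4) := by
      rw [← Real.rpow_add hr0, ← Real.rpow_add hr0]; norm_num
    rw [mul_div_assoc', div_eq_iff hne]
    push_cast
    linear_combination e2 - e1
  -- first conjunct
  have hfirst : ∀ᵐ ω ∂P, ∃ᶠ n in atTop, Y (2 * n) ω = 1 ∧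
      (l (2 * n + 1) : ℝ) * X (2 * n) ω
        = (n : ℝ) ^ ((1 : ℝ) / 16) - (n : ℝ) ^ (-(11 : ℝ) / 16) := by
    filter_upwards [hae] with ω hω
    rw [mem_limsup_iff_frequently_mem] at hω
    have := hω.and_eventually (eventually_ge_atTop 1)
    refine this.mono ?_
    rintro n ⟨hmem, hn⟩
    exact ⟨hmem, hcomp n hn ω hmem⟩
  refine ⟨hfirst, ?_⟩
  -- second conjunct
  intro htend
  obtain ⟨ω, hωf, hωt⟩ := (hfirst.and htend).exists
  -- the deterministic sequence tends to infinity
  have h1 : Tendsto (fun n : ℕ => (n : ℝ) ^ ((1 : ℝ) / 16)) atTop atTop :=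
    (_root_.tendsto_rpow_atTop (by norm_num : (0:ℝ) < 1/16)).comp tendsto_natCast_atTop_atTop
  have hv : Tendsto (fun n : ℕ => (n : ℝ) ^ ((1 : ℝ) / 16) - (n : ℝ) ^ (-(11 : ℝ) / 16))
      atTop atTop := by
    simp only [sub_eq_add_neg]
    refine Filter.tendsto_atTop_add_right_of_le' atTop (-1 : ℝ) h1 ?_
    filter_upwards [eventually_ge_atTop 1] with n hn
    have : (n : ℝ) ^ (-(11 : ℝ) / 16) ≤ 1 :=
      Real.rpow_le_one_of_one_le_of_nonpos (by exact_mod_cast hn) (by norm_num)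
    linarith
  have hev : ∀ᶠ (n : ℕ) in atTop,
      (1 : ℝ) ≤ (n : ℝ) ^ ((1 : ℝ) / 16) - (n : ℝ) ^ (-(11 : ℝ) / 16) :=
    hv.eventually_ge_atTop 1
  have hfreq2 : ∃ᶠ n in atTop, (1 : ℝ) ≤ (l (2 * n + 1) : ℝ) * X (2 * n) ω := by
    refine (hωf.and_eventually hev).mono ?_
    rintro n ⟨⟨_, heq⟩, h1'⟩
    rw [heq]; exact h1'
  have hlt : ∀ᶠ n in atTop, (l (2 * n + 1) : ℝ) * X (2 * n) ω < 1 :=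
    hωt.eventually_lt_const (by norm_num)
  obtain ⟨n, hge, hlt'⟩ := (hfreq2.and_eventually hlt).exists
  linarith
end
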